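/- Let X be an N-way real tensor of size I_1 × ⋯ × I_N that is symmetric with respect to a partition of its modes encoded by a cell map σ : {1,…,N} → {1,…,K} with cell dimensions Ĩ_1,…,Ĩ_K satisfying I_n = Ĩ_{σ(n)}. Let λ ∈ ℝ^r, let A_k ∈ ℝ^{Ĩ_k × r} for k ∈ {1,…,K}, let M be the symmetric Kruskal tensor with entries m_i = ∑_{j=1}^r λ_j ∏_{n=1}^N (A_{σ(n)})_{i_n, j}, let ℓ : ℝ × ℝ → ℝ be such that for every x ∈ ℝ the map m ↦ ℓ(x, m) is differentiable on ℝ with derivative ∂ℓ/∂m(x, m), and define F(λ, A_1,…,A_K) = ∑_i ℓ(x_i, m_i). Then for every k ∈ {1,…,K}, every mode k' with σ(k') = k, every a ∈ {1,…,Ĩ_k}, and every b ∈ {1,…,r}, the partial derivative of F with respect to the (a,b) entry of A_k exists and equals |I_k| · ∑_{i : i_{k'} = a} y_i · λ_b · ∏_{n ≠ k'} (A_{σ(n)})_{i_n, b}, where |I_k| is the number of modes t with σ(t) = k, y_i = ∂ℓ/∂m(x_i, m_i), and the sum runs over all multi-indices i whose k'-th coordinate equals a. -/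

import Mathlib

open Finset

/-- **SymGCP gradients for symmetric data.**
If the data tensor `X` is symmetric with respect to the partition encoded by the cell map
`σ`, then the partial derivative of the SymGCP objective with respect to the `(a,b)` entry
of the factor matrix `A_k` exists and equals
`|I_k| · ∑_{i : i_{k'} = a} y_i · λ_b · ∏_{n ≠ k'} (A_{σ(n)})_{i_n, b}`,
where `k'` is any mode in cell `k` and `y_i = ∂ℓ/∂m (x_i, m_i)`. -/
theorem symgcp_gradient_factor_symmetric_data
    (N K r : ℕ) (σ : Fin N → Fin K) (Itil : Fin K → ℕ)
    (X : ((n : Fin N) → Fin (Itil (σ n))) → ℝ)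
    (hX : ∀ (π : Equiv.Perm (Fin N)) (hπ : ∀ n, σ (π n) = σ n)
        (i : (n : Fin N) → Fin (Itil (σ n))),
        X (fun n => Fin.cast (congrArg Itil (hπ n)) (i (π n))) = X i)
    (lam : Fin r → ℝ) (A : (k : Fin K) → Fin (Itil k) → Fin r → ℝ)
    (ℓ : ℝ → ℝ → ℝ) (dℓ : ℝ → ℝ → ℝ)
    (hℓ : ∀ x m : ℝ, HasDerivAt (fun z => ℓ x z) (dℓ x m) m)
    (k : Fin K) (k' : Fin N) (hk' : σ k' = k) (a : Fin (Itil k)) (b : Fin r) :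
    HasDerivAt
      (fun t : ℝ => ∑ i : (n : Fin N) → Fin (Itil (σ n)),
        ℓ (X i) (∑ j : Fin r, lam j *
          ∏ n : Fin N,
            (Function.update A k (fun a' b' => if a' = a ∧ b' = b then t else A k a' b'))
              (σ n) (i n) j))
      (((Finset.univ.filter (fun t : Fin N => σ t = k)).card : ℝ) *
        ∑ i ∈ Finset.univ.filter
            (fun i : (n : Fin N) → Fin (Itil (σ n)) => ((i k' : ℕ) = (a : ℕ))),
          dℓ (X i) (∑ j : Fin r, lam j * ∏ n : Fin N, A (σ n) (i n) j) *
            (lam b * ∏ n ∈ Finset.univ.erase k', A (σ n) (i n) b))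
      (A k a b) := by
  classical
  set t0 : ℝ := A k a b with ht0
  -- evaluation of the updated factor matrices
  have factor_eq : ∀ (t : ℝ) (i : (n : Fin N) → Fin (Itil (σ n))) (n : Fin N) (j : Fin r),
      Function.update A k (fun a' b' => if a' = a ∧ b' = b then t else A k a' b')
          (σ n) (i n) j
        = if σ n = k ∧ ((i n : ℕ) = (a : ℕ)) ∧ j = b then t else A (σ n) (i n) j := by
    intro t i n j
    by_cases h : σ n = k
    · subst h
      simp [Function.update_self, Fin.ext_iff]
    · rw [Function.update_of_ne h]
      simp [h]
  -- the casting lemma for A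
  have A_cast : ∀ {p q : Fin K} (h : p = q) (x : Fin (Itil p)) (j : Fin r),
      A q (Fin.cast (congrArg Itil h) x) j = A p x j := by
    rintro p q rfl x j
    rfl
  -- derivative of each product
  have hprod : ∀ (i : (n : Fin N) → Fin (Itil (σ n))) (j : Fin r),
      HasDerivAt (fun t : ℝ => ∏ n : Fin N,
          Function.update A k (fun a' b' => if a' = a ∧ b' = b then t else A k a' b')
            (σ n) (i n) j)
        (∑ n : Fin N, (∏ m ∈ Finset.univ.erase n, A (σ m) (i m) j) *
          (if σ n = k ∧ ((i n : ℕ) = (a : ℕ)) ∧ j = b then (1:ℝ) else 0)) t0 := by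
    intro i j
    have h1 : ∀ n : Fin N, n ∈ (Finset.univ : Finset (Fin N)) →
        HasDerivAt (fun t : ℝ =>
            Function.update A k (fun a' b' => if a' = a ∧ b' = b then t else A k a' b')
              (σ n) (i n) j)
          (if σ n = k ∧ ((i n : ℕ) = (a : ℕ)) ∧ j = b then (1:ℝ) else 0) t0 := by
      intro n _
      have : (fun t : ℝ =>
          Function.update A k (fun a' b' => if a' = a ∧ b' = b then t else A k a' b')
            (σ n) (i n) j)
          = fun t : ℝ => if σ n = k ∧ ((i n : ℕ) = (a : ℕ)) ∧ j = b then t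
              else A (σ n) (i n) j := funext fun t => factor_eq t i n j
      rw [this]
      by_cases hc : σ n = k ∧ ((i n : ℕ) = (a : ℕ)) ∧ j = b
      · simp only [if_pos hc]; exact hasDerivAt_id' t0
      · simp only [if_neg hc]; exact hasDerivAt_const t0 _
    have h2 := HasDerivAt.fun_finsetProd h1
    have h3 : ∀ m : Fin N,
        Function.update A k (fun a' b' => if a' = a ∧ b' = b then t0 else A k a' b')
          (σ m) (i m) j = A (σ m) (i m) j := by
      intro m
      rw [factor_eq]
      split_ifs with hc
      · rcases hc with ⟨h1', h2', h3'⟩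
        subst h1'
        have : i m = a := Fin.ext h2'
        rw [ht0, this, h3']
      · rfl
    simpa [smul_eq_mul, h3] using h2
  -- derivative of each inner Kruskal value
  have hg : ∀ (i : (n : Fin N) → Fin (Itil (σ n))),
      HasDerivAt (fun t : ℝ => ∑ j : Fin r, lam j *
          ∏ n : Fin N,
            Function.update A k (fun a' b' => if a' = a ∧ b' = b then t else A k a' b')
              (σ n) (i n) j)
        (∑ j : Fin r, lam j * ∑ n : Fin N,
          (∏ m ∈ Finset.univ.erase n, A (σ m) (i m) j) *
          (if σ n = k ∧ ((i n : ℕ) = (a : ℕ)) ∧ j = b then (1:ℝ) else 0)) t0 :=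
    fun i => HasDerivAt.fun_sum (fun j _ => (hprod i j).const_mul (lam j))
  -- value of the Kruskal tensor at the base point
  have hval : ∀ (i : (n : Fin N) → Fin (Itil (σ n))),
      (∑ j : Fin r, lam j *
        ∏ n : Fin N,
          Function.update A k (fun a' b' => if a' = a ∧ b' = b then t0 else A k a' b')
            (σ n) (i n) j)
      = ∑ j : Fin r, lam j * ∏ n : Fin N, A (σ n) (i n) j := by
    intro i
    refine Finset.sum_congr rfl fun j _ => ?_
    congr 1
    refine Finset.prod_congr rfl fun n _ => ?_
    rw [factor_eq]
    split_ifs with hc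
    · rcases hc with ⟨h1', h2', h3'⟩
      subst h1'
      have : i n = a := Fin.ext h2'
      rw [ht0, this, h3']
    · rfl
  -- abbreviations
  set M : ((n : Fin N) → Fin (Itil (σ n))) → ℝ :=
    fun i => ∑ j : Fin r, lam j * ∏ n : Fin N, A (σ n) (i n) j with hM
  set D : ((n : Fin N) → Fin (Itil (σ n))) → ℝ :=
    fun i => ∑ j : Fin r, lam j * ∑ n : Fin N,
      (∏ m ∈ Finset.univ.erase n, A (σ m) (i m) j) *
      (if σ n = k ∧ ((i n : ℕ) = (a : ℕ)) ∧ j = b then (1:ℝ) else 0) with hDdef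
  -- derivative of the full objective
  have hF : HasDerivAt
      (fun t : ℝ => ∑ i : (n : Fin N) → Fin (Itil (σ n)),
        ℓ (X i) (∑ j : Fin r, lam j *
          ∏ n : Fin N,
            (Function.update A k (fun a' b' => if a' = a ∧ b' = b then t else A k a' b'))
              (σ n) (i n) j))
      (∑ i : (n : Fin N) → Fin (Itil (σ n)), dℓ (X i) (M i) * D i) t0 := by
    refine HasDerivAt.fun_sum (fun i _ => ?_)
    have h2 : HasDerivAt (fun z => ℓ (X i) z) (dℓ (X i) (M i))
        (∑ j : Fin r, lam j *
          ∏ n : Fin N,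
            Function.update A k (fun a' b' => if a' = a ∧ b' = b then t0 else A k a' b')
              (σ n) (i n) j) := by
      rw [hval i]
      exact hℓ (X i) (M i)
    exact h2.comp t0 (hg i)
  -- now rewrite the derivative value
  have hD : ∀ (i : (n : Fin N) → Fin (Itil (σ n))),
      D i = ∑ n : Fin N, if σ n = k ∧ ((i n : ℕ) = (a : ℕ)) then
          lam b * ∏ m ∈ Finset.univ.erase n, A (σ m) (i m) b else 0 := by
    intro i
    rw [hDdef]
    simp only [Finset.mul_sum]
    rw [Finset.sum_comm]
    refine Finset.sum_congr rfl fun n _ => ?_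
    by_cases hp : σ n = k ∧ ((i n : ℕ) = (a : ℕ))
    · simp [hp.1, hp.2, mul_ite, mul_one, mul_zero, Finset.sum_ite_eq',
        mul_comm, mul_left_comm]
    · have : ∀ j : Fin r, ¬(σ n = k ∧ ((i n : ℕ) = (a : ℕ)) ∧ j = b) := by
        intro j hj; exact hp ⟨hj.1, hj.2.1⟩
      simp [this, hp]
  -- the per-mode sums
  have key : ∀ n : Fin N, σ n = k →
      (∑ i ∈ Finset.univ.filter
          (fun i : (n : Fin N) → Fin (Itil (σ n)) => ((i n : ℕ) = (a : ℕ))),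
        dℓ (X i) (M i) * (lam b * ∏ m ∈ Finset.univ.erase n, A (σ m) (i m) b))
      = ∑ i ∈ Finset.univ.filter
          (fun i : (n : Fin N) → Fin (Itil (σ n)) => ((i k' : ℕ) = (a : ℕ))),
        dℓ (X i) (M i) * (lam b * ∏ m ∈ Finset.univ.erase k', A (σ m) (i m) b) := by
    intro n hn
    set π : Equiv.Perm (Fin N) := Equiv.swap n k' with hπdef
    have hπ : ∀ m, σ (π m) = σ m := by
      intro m
      rcases eq_or_ne m n with rfl | h1
      · rw [hπdef]; simp [Equiv.swap_apply_left, hk', hn]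
      rcases eq_or_ne m k' with rfl | h2
      · rw [hπdef]; simp [Equiv.swap_apply_right, hk', hn]
      · rw [hπdef, Equiv.swap_apply_of_ne_of_ne h1 h2]
    set e : ((m : Fin N) → Fin (Itil (σ m))) → ((m : Fin N) → Fin (Itil (σ m))) :=
      fun i m => Fin.cast (congrArg Itil (hπ m)) (i (π m)) with hedef
    have he_val : ∀ i m, ((e i m : ℕ)) = (i (π m) : ℕ) := fun i m => rfl
    have hee : ∀ i, e (e i) = i := by
      intro i
      funext m
      refine Fin.ext ?_
      rw [he_val, he_val, hπdef]
      rw [Equiv.swap_apply_self]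
    have hπn : π n = k' := by rw [hπdef]; exact Equiv.swap_apply_left n k'
    have hπk' : π k' = n := by rw [hπdef]; exact Equiv.swap_apply_right n k'
    have hXe : ∀ i, X (e i) = X i := fun i => hX π hπ i
    have hMe : ∀ i, M (e i) = M i := by
      intro i
      rw [hM]
      refine Finset.sum_congr rfl fun j _ => ?_
      congr 1
      calc ∏ m : Fin N, A (σ m) (e i m) j
          = ∏ m : Fin N, A (σ (π m)) (i (π m)) j := by
            refine Finset.prod_congr rfl fun m _ => ?_
            rw [hedef]
            exact A_cast (hπ m) (i (π m)) j
        _ = ∏ m : Fin N, A (σ m) (i m) j := Equiv.prod_comp π (fun m => A (σ m) (i m) j)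
    have hPe : ∀ i, (∏ m ∈ Finset.univ.erase k', A (σ m) (e i m) b)
        = ∏ m ∈ Finset.univ.erase n, A (σ m) (i m) b := by
      intro i
      calc ∏ m ∈ Finset.univ.erase k', A (σ m) (e i m) b
          = ∏ m ∈ Finset.univ.erase k', A (σ (π m)) (i (π m)) b := by
            refine Finset.prod_congr rfl fun m _ => ?_
            rw [hedef]
            exact A_cast (hπ m) (i (π m)) b
        _ = ∏ m ∈ Finset.univ.erase n, A (σ m) (i m) b := by
            refine Finset.prod_nbij' (fun m => π m) (fun m => π m) ?_ ?_ ?_ ?_ ?_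
            · intro m hm
              simp only [Finset.mem_erase, Finset.mem_univ, and_true] at hm ⊢
              intro hc
              exact hm (π.injective (hc.trans hπk'.symm))
            · intro m hm
              simp only [Finset.mem_erase, Finset.mem_univ, and_true] at hm ⊢
              intro hc
              exact hm (π.injective (hc.trans hπn.symm))
            · intro m _
              exact Equiv.swap_apply_self n k' m
            · intro m _
              exact Equiv.swap_apply_self n k' m
            · intro m _; rfl
    refine Finset.sum_nbij' e e ?_ ?_ ?_ ?_ ?_
    · intro i hi
      simp only [Finset.mem_filter, Finset.mem_univ, true_and] at hi ⊢
      rw [he_val, hπk', hi]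
    · intro i hi
      simp only [Finset.mem_filter, Finset.mem_univ, true_and] at hi ⊢
      rw [he_val, hπn, hi]
    · intro i _; exact hee i
    · intro i _; exact hee i
    · intro i _
      rw [hXe, hMe, hPe]
  -- assemble the final identity for the derivative value
  have hfinal : (∑ i : (n : Fin N) → Fin (Itil (σ n)), dℓ (X i) (M i) * D i)
      = ((Finset.univ.filter (fun t : Fin N => σ t = k)).card : ℝ) *
        ∑ i ∈ Finset.univ.filter
            (fun i : (n : Fin N) → Fin (Itil (σ n)) => ((i k' : ℕ) = (a : ℕ))),
          dℓ (X i) (M i) *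
            (lam b * ∏ m ∈ Finset.univ.erase k', A (σ m) (i m) b) := by
    calc ∑ i : (n : Fin N) → Fin (Itil (σ n)), dℓ (X i) (M i) * D i
        = ∑ i : (n : Fin N) → Fin (Itil (σ n)), ∑ n : Fin N,
            (if σ n = k ∧ ((i n : ℕ) = (a : ℕ)) then
              dℓ (X i) (M i) * (lam b * ∏ m ∈ Finset.univ.erase n, A (σ m) (i m) b)
             else 0) := by
          refine Finset.sum_congr rfl fun i _ => ?_
          rw [hD i, Finset.mul_sum]
          refine Finset.sum_congr rfl fun n _ => ?_
          rw [mul_ite, mul_zero]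
      _ = ∑ n : Fin N, ∑ i : (n : Fin N) → Fin (Itil (σ n)),
            (if σ n = k ∧ ((i n : ℕ) = (a : ℕ)) then
              dℓ (X i) (M i) * (lam b * ∏ m ∈ Finset.univ.erase n, A (σ m) (i m) b)
             else 0) := Finset.sum_comm
      _ = ∑ n ∈ Finset.univ.filter (fun t : Fin N => σ t = k),
            ∑ i ∈ Finset.univ.filter
              (fun i : (n' : Fin N) → Fin (Itil (σ n')) => ((i n : ℕ) = (a : ℕ))),
            dℓ (X i) (M i) * (lam b * ∏ m ∈ Finset.univ.erase n, A (σ m) (i m) b) := by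
          rw [Finset.sum_filter]
          refine Finset.sum_congr rfl fun n _ => ?_
          by_cases hn : σ n = k
          · rw [if_pos hn, Finset.sum_filter]
            refine Finset.sum_congr rfl fun i _ => ?_
            simp [hn]
          · rw [if_neg hn]
            refine Finset.sum_eq_zero fun i _ => ?_
            simp [hn]
      _ = ∑ n ∈ Finset.univ.filter (fun t : Fin N => σ t = k),
            ∑ i ∈ Finset.univ.filter
              (fun i : (n' : Fin N) → Fin (Itil (σ n')) => ((i k' : ℕ) = (a : ℕ))),
            dℓ (X i) (M i) * (lam b * ∏ m ∈ Finset.univ.erase k', A (σ m) (i m) b) := by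
          refine Finset.sum_congr rfl fun n hn => ?_
          exact key n (Finset.mem_filter.mp hn).2
      _ = ((Finset.univ.filter (fun t : Fin N => σ t = k)).card : ℝ) *
            ∑ i ∈ Finset.univ.filter
              (fun i : (n' : Fin N) → Fin (Itil (σ n')) => ((i k' : ℕ) = (a : ℕ))),
            dℓ (X i) (M i) * (lam b * ∏ m ∈ Finset.univ.erase k', A (σ m) (i m) b) := by
          rw [Finset.sum_const, nsmul_eq_mul]
  rw [← hfinal]
  exact hF
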